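/- Let λ > 0, let X ∈ ℝ^{V×D} have strictly positive entries, let W^{(n)} ∈ ℝ^{V×K} have strictly positive entries with every column in Δ_{V−1}, and let H^{(n)} ∈ ℝ^{K×D} have strictly positive entries. Define the updates w^{(n+1)}_{vk} = (w^{(n)}_{vk} Σ_d x_{vd} h^{(n)}_{kd}/(W^{(n)}H^{(n)})_{vd}) / (Σ_{v′} w^{(n)}_{v′k} Σ_d x_{v′d} h^{(n)}_{kd}/(W^{(n)}H^{(n)})_{v′d}) and h^{(n+1)}_{kd} = (1/(1+λ)) · h^{(n)}_{kd} Σ_v x_{vd} w^{(n)}_{vk}/(W^{(n)}H^{(n)})_{vd}. Then every column of W^{(n+1)} lies in Δ_{V−1} and D_KL(X‖W^{(n+1)}H^{(n+1)}) + λ Σ_{k,d} h^{(n+1)}_{kd} ≤ D_KL(X‖W^{(n)}H^{(n)}) + λ Σ_{k,d} h^{(n)}_{kd}. -/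

import Mathlib

/-- Matrix product `(WH)_{vd} = ∑ k, w_{vk} h_{kd}`. -/
noncomputable def matMul {V K D : ℕ} (W : Fin V → Fin K → ℝ) (H : Fin K → Fin D → ℝ) :
    Fin V → Fin D → ℝ := fun v d => ∑ k, W v k * H k d

/-- Generalized Kullback--Leibler divergence (real-valued; used here for strictly
positive matrices). -/
noncomputable def klDiv {V D : ℕ} (X Y : Fin V → Fin D → ℝ) : ℝ :=
  ∑ v, ∑ d, (X v d * Real.log (X v d / Y v d) - X v d + Y v d)

open Finset

lemma gibbs {a b : ℝ} (ha : 0 < a) (hb : 0 < b) : a * Real.log (b / a) ≤ b - a := by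
  have h := Real.log_le_sub_one_of_pos (div_pos hb ha)
  have h2 : a * (b / a - 1) = b - a := by field_simp
  nlinarith

lemma gibbs_sum {ι : Type*} [Fintype ι] (a b : ι → ℝ) (ha : ∀ i, 0 < a i)
    (hb : ∀ i, 0 < b i) :
    ∑ i, a i * Real.log (b i / a i) ≤ (∑ i, b i) - ∑ i, a i := by
  rw [← Finset.sum_sub_distrib]
  exact Finset.sum_le_sum fun i _ => gibbs (ha i) (hb i)

lemma jensen_log {ι : Type*} [Fintype ι] (p a : ι → ℝ) (hp : ∀ i, 0 < p i)
    (ha : ∀ i, 0 < a i) (hps : ∑ i, p i = 1) :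
    ∑ i, p i * Real.log (a i / p i) ≤ Real.log (∑ i, a i) := by
  have hne : (Finset.univ : Finset ι).Nonempty := by
    rcases (Finset.univ : Finset ι).eq_empty_or_nonempty with h | h
    · rw [h] at hps; simp at hps
    · exact h
  have hs : 0 < ∑ i, a i := Finset.sum_pos (fun i _ => ha i) hne
  have key : ∀ i, p i * Real.log (a i / p i) - p i * Real.log (∑ j, a j)
      ≤ a i / (∑ j, a j) - p i := by
    intro i
    have h2 := gibbs (hp i) (div_pos (ha i) hs)
    have h1 : (a i / (∑ j, a j)) / p i = (a i / p i) / (∑ j, a j) := div_right_comm _ _ _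
    rw [h1, Real.log_div (div_pos (ha i) (hp i)).ne' (ne_of_gt hs), mul_sub] at h2
    linarith
  have hsum := Finset.sum_le_sum (fun i (_ : i ∈ Finset.univ) => key i)
  rw [Finset.sum_sub_distrib, Finset.sum_sub_distrib, ← Finset.sum_mul, hps, one_mul,
      ← Finset.sum_div, div_self (ne_of_gt hs)] at hsum
  linarith

/-- One step of the joint multiplicative updates for ℓ1-penalized (sparse) NMF with an
ℓ1 normalization constraint on the columns of `W`: the updated `W` has simplex columns
and the penalized objective `D_KL(X‖WH) + λ‖H‖₁` does not increase. -/
theorem joint_mu_sparse_descent {V K D : ℕ} (hD : 0 < D)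
    (lam : ℝ) (hlam : 0 < lam)
    (X : Fin V → Fin D → ℝ) (hX : ∀ v d, 0 < X v d)
    (W : Fin V → Fin K → ℝ) (H : Fin K → Fin D → ℝ)
    (hWpos : ∀ v k, 0 < W v k) (hWsum : ∀ k, (∑ v, W v k) = 1)
    (hHpos : ∀ k d, 0 < H k d) :
    let Wn : Fin V → Fin K → ℝ := fun v k =>
      (W v k * (∑ d, X v d * H k d / matMul W H v d)) /
        (∑ v', W v' k * (∑ d, X v' d * H k d / matMul W H v' d))
    let Hn : Fin K → Fin D → ℝ := fun k d =>
      (1 / (1 + lam)) * (H k d * (∑ v, X v d * W v k / matMul W H v d))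
    ((∀ v k, 0 ≤ Wn v k) ∧ (∀ k, (∑ v, Wn v k) = 1)) ∧
    klDiv X (matMul Wn Hn) + lam * (∑ k, ∑ d, Hn k d)
      ≤ klDiv X (matMul W H) + lam * (∑ k, ∑ d, H k d) := by
  intro Wn Hn
  rcases Nat.eq_zero_or_pos K with hK | hK
  · subst hK
    refine ⟨⟨fun v k => k.elim0, fun k => k.elim0⟩, ?_⟩
    simp [matMul, klDiv]
  obtain ⟨k0⟩ : Nonempty (Fin K) := ⟨⟨0, hK⟩⟩
  rcases Nat.eq_zero_or_pos V with hV | hV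
  · exfalso; subst hV; have := hWsum k0; simp at this
  have hVne : (Finset.univ : Finset (Fin V)).Nonempty := ⟨⟨0, hV⟩, Finset.mem_univ _⟩
  have hKne : (Finset.univ : Finset (Fin K)).Nonempty := ⟨k0, Finset.mem_univ _⟩
  have hDne : (Finset.univ : Finset (Fin D)).Nonempty := ⟨⟨0, hD⟩, Finset.mem_univ _⟩
  have hlam1 : (0:ℝ) < 1 + lam := by linarith
  have hS : ∀ v d, 0 < matMul W H v d := fun v d =>
    Finset.sum_pos (fun k _ => mul_pos (hWpos v k) (hHpos k d)) hKne
  set p : Fin V → Fin D → Fin K → ℝ :=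
    fun v d k => W v k * H k d / matMul W H v d with hpdef
  have hppos : ∀ v d k, 0 < p v d k := fun v d k =>
    div_pos (mul_pos (hWpos v k) (hHpos k d)) (hS v d)
  have hpsum : ∀ v d, ∑ k, p v d k = 1 := by
    intro v d
    rw [hpdef]
    rw [← Finset.sum_div]
    exact div_self (ne_of_gt (hS v d))
  set A : Fin V → Fin K → ℝ :=
    fun v k => W v k * ∑ d, X v d * H k d / matMul W H v d with hAdef
  set den : Fin K → ℝ := fun k => ∑ v, A v k with hdendef
  set B : Fin K → Fin D → ℝ :=
    fun k d => H k d * ∑ v, X v d * W v k / matMul W H v d with hBdef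
  have hApos : ∀ v k, 0 < A v k := fun v k =>
    mul_pos (hWpos v k)
      (Finset.sum_pos (fun d _ => div_pos (mul_pos (hX v d) (hHpos k d)) (hS v d)) hDne)
  have hden : ∀ k, 0 < den k := fun k =>
    Finset.sum_pos (fun v _ => hApos v k) hVne
  have hBpos : ∀ k d, 0 < B k d := fun k d =>
    mul_pos (hHpos k d)
      (Finset.sum_pos (fun v _ => div_pos (mul_pos (hX v d) (hWpos v k)) (hS v d)) hVne)
  have hWn : ∀ v k, Wn v k = A v k / den k := fun v k => rfl
  have hHn : ∀ k d, Hn k d = B k d / (1 + lam) := fun k d => one_div_mul_eq_div _ _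
  have hWnpos : ∀ v k, 0 < Wn v k := fun v k => by
    rw [hWn]; exact div_pos (hApos v k) (hden k)
  have hHnpos : ∀ k d, 0 < Hn k d := fun k d => by
    rw [hHn]; exact div_pos (hBpos k d) hlam1
  have hWnsum : ∀ k, ∑ v, Wn v k = 1 := by
    intro k
    have : ∑ v, Wn v k = ∑ v, A v k / den k := Finset.sum_congr rfl fun v _ => hWn v k
    rw [this, ← Finset.sum_div]
    exact div_self (hden k).ne'
  have hSn : ∀ v d, 0 < matMul Wn Hn v d := fun v d =>
    Finset.sum_pos (fun k _ => mul_pos (hWnpos v k) (hHnpos k d)) hKne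
  -- ∑_d X v d * p v d k = A v k
  have hA' : ∀ v k, ∑ d, X v d * p v d k = A v k := by
    intro v k
    simp only [hAdef, hpdef, Finset.mul_sum]
    exact Finset.sum_congr rfl fun d _ => by ring
  have hB' : ∀ k d, ∑ v, X v d * p v d k = B k d := by
    intro k d
    simp only [hBdef, hpdef, Finset.mul_sum]
    exact Finset.sum_congr rfl fun v _ => by ring
  have stepA : klDiv X (matMul Wn Hn) + lam * (∑ k, ∑ d, Hn k d) ≤
      (∑ v, ∑ d, (X v d * Real.log (X v d)
        - X v d * ∑ k, p v d k * Real.log (Wn v k * Hn k d / p v d k)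
        - X v d + matMul Wn Hn v d)) + lam * (∑ k, ∑ d, Hn k d) := by
    refine add_le_add ?_ le_rfl
    simp only [klDiv]
    refine Finset.sum_le_sum fun v _ => Finset.sum_le_sum fun d _ => ?_
    have hj : ∑ k, p v d k * Real.log ((Wn v k * Hn k d) / p v d k)
        ≤ Real.log (∑ k, Wn v k * Hn k d) :=
      jensen_log (p v d) (fun k => Wn v k * Hn k d) (hppos v d)
        (fun k => mul_pos (hWnpos v k) (hHnpos k d)) (hpsum v d)
    have hT : (∑ k, Wn v k * Hn k d) = matMul Wn Hn v d := rfl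
    rw [hT] at hj
    have hj2 := mul_le_mul_of_nonneg_left hj (hX v d).le
    rw [Real.log_div (hX v d).ne' (hSn v d).ne', mul_sub]
    linarith
  have hGsep : ∀ (W' : Fin V → Fin K → ℝ) (H' : Fin K → Fin D → ℝ),
      (∀ v k, 0 < W' v k) → (∀ k d, 0 < H' k d) → (∀ k, ∑ v, W' v k = 1) →
      (∑ v, ∑ d, (X v d * Real.log (X v d)
        - X v d * ∑ k, p v d k * Real.log (W' v k * H' k d / p v d k)
        - X v d + matMul W' H' v d)) + lam * (∑ k, ∑ d, H' k d)
      = (∑ v, ∑ d, (X v d * Real.log (X v d)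
          + X v d * ∑ k, p v d k * Real.log (p v d k) - X v d))
        - (∑ k, ∑ v, A v k * Real.log (W' v k))
        - (∑ k, ∑ d, B k d * Real.log (H' k d))
        + (1 + lam) * ∑ k, ∑ d, H' k d := by
    intro W' H' hW' hH' hW's
    have hterm : ∀ v d, X v d * Real.log (X v d)
          - X v d * ∑ k, p v d k * Real.log (W' v k * H' k d / p v d k)
          - X v d + matMul W' H' v d
        = (X v d * Real.log (X v d) + X v d * ∑ k, p v d k * Real.log (p v d k) - X v d)
          - X v d * (∑ k, p v d k * Real.log (W' v k))
          - X v d * (∑ k, p v d k * Real.log (H' k d))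
          + matMul W' H' v d := by
      intro v d
      have hlog : ∑ k, p v d k * Real.log (W' v k * H' k d / p v d k)
          = (∑ k, p v d k * Real.log (W' v k)) + (∑ k, p v d k * Real.log (H' k d))
            - ∑ k, p v d k * Real.log (p v d k) := by
        rw [← Finset.sum_add_distrib, ← Finset.sum_sub_distrib]
        refine Finset.sum_congr rfl fun k _ => ?_
        rw [Real.log_div (mul_pos (hW' v k) (hH' k d)).ne' (hppos v d k).ne',
            Real.log_mul (hW' v k).ne' (hH' k d).ne']
        ring
      rw [hlog]; ring
    have hsplit : ∑ v, ∑ d, (X v d * Real.log (X v d)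
          - X v d * ∑ k, p v d k * Real.log (W' v k * H' k d / p v d k)
          - X v d + matMul W' H' v d)
        = (∑ v, ∑ d, (X v d * Real.log (X v d)
            + X v d * ∑ k, p v d k * Real.log (p v d k) - X v d))
          - (∑ v, ∑ d, X v d * (∑ k, p v d k * Real.log (W' v k)))
          - (∑ v, ∑ d, X v d * (∑ k, p v d k * Real.log (H' k d)))
          + ∑ v, ∑ d, matMul W' H' v d := by
      calc ∑ v, ∑ d, (X v d * Real.log (X v d)
              - X v d * ∑ k, p v d k * Real.log (W' v k * H' k d / p v d k)
              - X v d + matMul W' H' v d)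
          = ∑ v, ∑ d, ((X v d * Real.log (X v d)
              + X v d * ∑ k, p v d k * Real.log (p v d k) - X v d)
              - X v d * (∑ k, p v d k * Real.log (W' v k))
              - X v d * (∑ k, p v d k * Real.log (H' k d))
              + matMul W' H' v d) :=
            Finset.sum_congr rfl fun v _ => Finset.sum_congr rfl fun d _ => hterm v d
        _ = _ := by simp only [Finset.sum_add_distrib, Finset.sum_sub_distrib]
    have s1 : ∑ v, ∑ d, X v d * (∑ k, p v d k * Real.log (W' v k))
        = ∑ k, ∑ v, A v k * Real.log (W' v k) := by
      have h : ∀ v, ∑ d, X v d * (∑ k, p v d k * Real.log (W' v k))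
          = ∑ k, A v k * Real.log (W' v k) := by
        intro v
        calc ∑ d, X v d * (∑ k, p v d k * Real.log (W' v k))
            = ∑ d, ∑ k, X v d * p v d k * Real.log (W' v k) := by
              refine Finset.sum_congr rfl fun d _ => ?_
              rw [Finset.mul_sum]
              exact Finset.sum_congr rfl fun k _ => (mul_assoc _ _ _).symm
          _ = ∑ k, ∑ d, X v d * p v d k * Real.log (W' v k) := Finset.sum_comm
          _ = ∑ k, (∑ d, X v d * p v d k) * Real.log (W' v k) := by
              refine Finset.sum_congr rfl fun k _ => (Finset.sum_mul _ _ _).symm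
          _ = ∑ k, A v k * Real.log (W' v k) :=
              Finset.sum_congr rfl fun k _ => by rw [hA' v k]
      calc ∑ v, ∑ d, X v d * (∑ k, p v d k * Real.log (W' v k))
          = ∑ v, ∑ k, A v k * Real.log (W' v k) :=
            Finset.sum_congr rfl fun v _ => h v
        _ = ∑ k, ∑ v, A v k * Real.log (W' v k) := Finset.sum_comm
    have s2 : ∑ v, ∑ d, X v d * (∑ k, p v d k * Real.log (H' k d))
        = ∑ k, ∑ d, B k d * Real.log (H' k d) := by
      calc ∑ v, ∑ d, X v d * (∑ k, p v d k * Real.log (H' k d))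
          = ∑ v, ∑ d, ∑ k, X v d * p v d k * Real.log (H' k d) := by
            refine Finset.sum_congr rfl fun v _ => Finset.sum_congr rfl fun d _ => ?_
            rw [Finset.mul_sum]
            exact Finset.sum_congr rfl fun k _ => (mul_assoc _ _ _).symm
        _ = ∑ v, ∑ k, ∑ d, X v d * p v d k * Real.log (H' k d) :=
            Finset.sum_congr rfl fun v _ => Finset.sum_comm
        _ = ∑ k, ∑ v, ∑ d, X v d * p v d k * Real.log (H' k d) := Finset.sum_comm
        _ = ∑ k, ∑ d, ∑ v, X v d * p v d k * Real.log (H' k d) :=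
            Finset.sum_congr rfl fun k _ => Finset.sum_comm
        _ = ∑ k, ∑ d, (∑ v, X v d * p v d k) * Real.log (H' k d) := by
            refine Finset.sum_congr rfl fun k _ => Finset.sum_congr rfl fun d _ =>
              (Finset.sum_mul _ _ _).symm
        _ = ∑ k, ∑ d, B k d * Real.log (H' k d) :=
            Finset.sum_congr rfl fun k _ => Finset.sum_congr rfl fun d _ => by rw [hB' k d]
    have s3 : ∑ v, ∑ d, matMul W' H' v d = ∑ k, ∑ d, H' k d := by
      calc ∑ v, ∑ d, matMul W' H' v d
          = ∑ v, ∑ d, ∑ k, W' v k * H' k d := rfl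
        _ = ∑ v, ∑ k, ∑ d, W' v k * H' k d :=
            Finset.sum_congr rfl fun v _ => Finset.sum_comm
        _ = ∑ k, ∑ v, ∑ d, W' v k * H' k d := Finset.sum_comm
        _ = ∑ k, ∑ d, ∑ v, W' v k * H' k d :=
            Finset.sum_congr rfl fun k _ => Finset.sum_comm
        _ = ∑ k, ∑ d, (∑ v, W' v k) * H' k d := by
            refine Finset.sum_congr rfl fun k _ => Finset.sum_congr rfl fun d _ => ?_
            rw [Finset.sum_mul]
        _ = ∑ k, ∑ d, H' k d :=
            Finset.sum_congr rfl fun k _ => Finset.sum_congr rfl fun d _ => by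
              rw [hW's k, one_mul]
    rw [hsplit, s1, s2, s3]; ring
  have stepC : (∑ v, ∑ d, (X v d * Real.log (X v d)
        - X v d * ∑ k, p v d k * Real.log (W v k * H k d / p v d k)
        - X v d + matMul W H v d)) + lam * (∑ k, ∑ d, H k d)
      = klDiv X (matMul W H) + lam * (∑ k, ∑ d, H k d) := by
    refine congrArg (· + lam * (∑ k, ∑ d, H k d)) ?_
    simp only [klDiv]
    refine Finset.sum_congr rfl fun v _ => Finset.sum_congr rfl fun d _ => ?_
    have h1 : ∀ k : Fin K, W v k * H k d / p v d k = matMul W H v d := by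
      intro k
      simp only [hpdef]
      rw [div_div_eq_mul_div, mul_div_cancel_left₀ _ (mul_pos (hWpos v k) (hHpos k d)).ne']
    have h2 : ∑ k, p v d k * Real.log (W v k * H k d / p v d k)
        = Real.log (matMul W H v d) := by
      calc ∑ k, p v d k * Real.log (W v k * H k d / p v d k)
          = ∑ k, p v d k * Real.log (matMul W H v d) :=
            Finset.sum_congr rfl fun k _ => by rw [h1 k]
        _ = (∑ k, p v d k) * Real.log (matMul W H v d) := (Finset.sum_mul _ _ _).symm
        _ = Real.log (matMul W H v d) := by rw [hpsum v d, one_mul]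
    rw [h2, Real.log_div (hX v d).ne' (hS v d).ne']
    ring
  have hWineq : ∑ k, ∑ v, A v k * Real.log (W v k)
      ≤ ∑ k, ∑ v, A v k * Real.log (Wn v k) := by
    refine Finset.sum_le_sum fun k _ => ?_
    have hg : ∑ v, A v k * Real.log ((W v k * den k) / A v k)
        ≤ (∑ v, W v k * den k) - ∑ v, A v k :=
      gibbs_sum (fun v => A v k) (fun v => W v k * den k)
        (fun v => hApos v k) (fun v => mul_pos (hWpos v k) (hden k))
    have h1 : ∑ v, W v k * den k = den k := by
      rw [← Finset.sum_mul, hWsum k, one_mul]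
    have h2 : ∀ v : Fin V, A v k * Real.log (W v k * den k / A v k)
        = A v k * Real.log (W v k) - A v k * Real.log (Wn v k) := by
      intro v
      rw [hWn v k, Real.log_div (mul_pos (hWpos v k) (hden k)).ne' (hApos v k).ne',
          Real.log_mul (hWpos v k).ne' (hden k).ne',
          Real.log_div (hApos v k).ne' (hden k).ne']
      ring
    rw [Finset.sum_congr rfl (fun v _ => h2 v), Finset.sum_sub_distrib, h1] at hg
    have hds : ∑ v, A v k = den k := rfl
    rw [hds] at hg
    linarith
  have hHineq : (∑ k, ∑ d, B k d * Real.log (H k d)) + (1 + lam) * ∑ k, ∑ d, Hn k d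
      ≤ (∑ k, ∑ d, B k d * Real.log (Hn k d)) + (1 + lam) * ∑ k, ∑ d, H k d := by
    have key : ∀ k d, B k d * Real.log (H k d) + (1 + lam) * Hn k d
        ≤ B k d * Real.log (Hn k d) + (1 + lam) * H k d := by
      intro k d
      have hg := gibbs (hBpos k d) (mul_pos hlam1 (hHpos k d))
      have h1 : Real.log ((1 + lam) * H k d / B k d)
          = Real.log (H k d) - Real.log (Hn k d) := by
        rw [hHn k d, Real.log_div (mul_pos hlam1 (hHpos k d)).ne' (hBpos k d).ne',
            Real.log_mul hlam1.ne' (hHpos k d).ne',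
            Real.log_div (hBpos k d).ne' hlam1.ne']
        ring
      have h2 : (1 + lam) * Hn k d = B k d := by
        rw [hHn k d]; field_simp
      rw [h1, mul_sub] at hg
      linarith
    have expand : ∀ (F G : Fin K → Fin D → ℝ),
        ∑ k, ∑ d, (F k d + (1 + lam) * G k d)
        = (∑ k, ∑ d, F k d) + (1 + lam) * ∑ k, ∑ d, G k d := by
      intro F G
      rw [Finset.mul_sum, ← Finset.sum_add_distrib]
      refine Finset.sum_congr rfl fun k _ => ?_
      rw [Finset.mul_sum, ← Finset.sum_add_distrib]
    calc (∑ k, ∑ d, B k d * Real.log (H k d)) + (1 + lam) * ∑ k, ∑ d, Hn k d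
        = ∑ k, ∑ d, (B k d * Real.log (H k d) + (1 + lam) * Hn k d) :=
          (expand _ _).symm
      _ ≤ ∑ k, ∑ d, (B k d * Real.log (Hn k d) + (1 + lam) * H k d) :=
          Finset.sum_le_sum fun k _ => Finset.sum_le_sum fun d _ => key k d
      _ = _ := expand _ _
  have e1 := hGsep Wn Hn hWnpos hHnpos hWnsum
  have e2 := hGsep W H hWpos hHpos hWsum
  refine ⟨⟨fun v k => (hWnpos v k).le, hWnsum⟩, ?_⟩
  linarith [stepA, e1, e2, stepC, hWineq, hHineq]
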